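/- Let H be a complex Hilbert space, regarded as a JB*-triple with triple product {x,y,z} := (1/2)(⟨x,y⟩z + ⟨z,y⟩x), where ⟨·,·⟩ denotes the inner product (linear in the first variable, conjugate linear in the second). Then every weak-local triple derivation on H is a triple derivation. -/

import Mathlib

variable {H : Type*} [NormedAddCommGroup H] [InnerProductSpace ℂ H] [CompleteSpace H]

/-- The JB*-triple product on a complex Hilbert space,
`{x,y,z} = (1/2)(⟨x,y⟩ z + ⟨z,y⟩ x)`, where `⟨·,·⟩` is linear in the first variable
and conjugate linear in the second (so `⟨x,y⟩ = inner ℂ y x` in Mathlib's convention). -/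
noncomputable def htp (x y z : H) : H :=
  (2⁻¹ : ℂ) • ((inner ℂ y x : ℂ) • z + (inner ℂ y z : ℂ) • x)

/-- A triple derivation on the Hilbert space `H`. -/
def IsHilbertTripleDerivation (δ : H → H) : Prop :=
  IsLinearMap ℂ δ ∧
    ∀ x y z : H, δ (htp x y z) = htp (δ x) y z + htp x (δ y) z + htp x y (δ z)

/-- A weak-local triple derivation on the Hilbert space `H`. -/
def IsHilbertWeakLocalTripleDerivation (T : H → H) : Prop :=
  IsLinearMap ℂ T ∧
    ∀ (φ : H →L[ℂ] ℂ) (a : H),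
      ∃ δ : H → H, IsHilbertTripleDerivation δ ∧ φ (T a) = φ (δ a)

/-- A linear skew map is a triple derivation. -/
lemma deriv_of_skew (δ : H → H) (hl : IsLinearMap ℂ δ)
    (hs : ∀ x y : H, (inner ℂ y (δ x) : ℂ) + inner ℂ (δ y) x = 0) :
    IsHilbertTripleDerivation δ := by
  refine ⟨hl, fun x y z => ?_⟩
  have e1 : (inner ℂ (δ y) x : ℂ) = - inner ℂ y (δ x) := by linear_combination hs x y
  have e2 : (inner ℂ (δ y) z : ℂ) = - inner ℂ y (δ z) := by linear_combination hs z y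
  simp only [htp, hl.map_add, hl.map_smul, e1, e2]
  module

lemma skew_of_deriv (δ : H → H) (hd : IsHilbertTripleDerivation δ) :
    ∀ x y : H, (inner ℂ y (δ x) : ℂ) + inner ℂ (δ y) x = 0 := by
  intro x y
  rcases eq_or_ne x 0 with rfl | hx
  · simp [hd.1.map_zero]
  · have h : ((inner ℂ y (δ x) : ℂ) + inner ℂ (δ y) x) • x =
        (htp (δ x) y x + htp x (δ y) x + htp x y (δ x)) - δ (htp x y x) := by
      simp only [htp, hd.1.map_add, hd.1.map_smul]
      module
    rw [← hd.2 x y x, sub_self] at h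
    exact (smul_eq_zero.mp h).resolve_right hx

/-- Every weak-local triple derivation on a complex Hilbert space is a triple
derivation. -/
theorem stmt19 (T : H → H) (hT : IsHilbertWeakLocalTripleDerivation T) :
    IsHilbertTripleDerivation T := by
  have r : ∀ a : H, (inner ℂ a (T a) : ℂ).re = 0 := by
    intro a
    obtain ⟨δ, hδ, hφ⟩ := hT.2 (innerSL ℂ a) a
    simp only [innerSL_apply_apply] at hφ
    have hs := skew_of_deriv δ hδ a a
    rw [← inner_conj_symm (δ a) a] at hs
    have := congrArg Complex.re hs
    simp only [Complex.add_re, Complex.conj_re, Complex.zero_re] at this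
    rw [hφ]
    linarith
  refine deriv_of_skew T hT.1 fun x y => ?_
  have r1 := r (x + y)
  have r2 := r (x + Complex.I • y)
  have rx := r x
  have ry := r y
  simp only [hT.1.map_add, hT.1.map_smul, inner_add_left, inner_add_right,
    inner_smul_left, inner_smul_right, Complex.conj_I, Complex.add_re,
    Complex.add_im, Complex.mul_re, Complex.mul_im, Complex.neg_re, Complex.neg_im,
    Complex.conj_re, Complex.conj_im, Complex.I_re, Complex.I_im] at r1 r2
  rw [← inner_conj_symm (T y) x]
  apply Complex.ext <;>
    simp only [Complex.add_re, Complex.add_im, Complex.conj_re, Complex.conj_im,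
      Complex.zero_re, Complex.zero_im] <;>
    linarith
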